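/- For the KLR algebra R(ν) with ν = i + j where i·j = −1 (two adjacent vertices), R(ν) is isomorphic to the subring of 2×2 matrices over ℤ[x₁,x₂] consisting of matrices whose lower-left entry is divisible by x₁+x₂; under this isomorphism the crossing from 1_{ij} to 1_{ji} maps to (x₁+x₂)E₂₁ and the crossing from 1_{ji} to 1_{ij} maps to E₁₂. -/

import Mathlib

noncomputable section

/-- Generators of the KLR algebra R(i+j) for two adjacent vertices i, j. -/
inductive KLRGen : Type
  | eij | eji        -- idempotents 1_{ij}, 1_{ji}
  | xij1 | xij2      -- dots on strands 1, 2 of 1_{ij}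
  | xji1 | xji2      -- dots on strands 1, 2 of 1_{ji}
  | dij | dji        -- crossings ij → ji and ji → ij

open KLRGen FreeAlgebra

/-- The free ℤ-algebra on the generators. -/
abbrev KLRFree : Type := FreeAlgebra ℤ KLRGen

/-- Shorthand for a generator of the free algebra. -/
def g (a : KLRGen) : KLRFree := FreeAlgebra.ι ℤ a

/-- Defining relations of R(i+j) for i·j = −1: as in the orthogonal case, except
that the double crossings equal the sum of the two dots. -/
inductive KLRRel : KLRFree → KLRFree → Prop
  | idem1 : KLRRel (g eij * g eij) (g eij)
  | idem2 : KLRRel (g eji * g eji) (g eji)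
  | orth1 : KLRRel (g eij * g eji) 0
  | orth2 : KLRRel (g eji * g eij) 0
  | unit : KLRRel (g eij + g eji) 1
  | dotl1 : KLRRel (g eij * g xij1) (g xij1)
  | dotr1 : KLRRel (g xij1 * g eij) (g xij1)
  | dotl2 : KLRRel (g eij * g xij2) (g xij2)
  | dotr2 : KLRRel (g xij2 * g eij) (g xij2)
  | dotl3 : KLRRel (g eji * g xji1) (g xji1)
  | dotr3 : KLRRel (g xji1 * g eji) (g xji1)
  | dotl4 : KLRRel (g eji * g xji2) (g xji2)
  | dotr4 : KLRRel (g xji2 * g eji) (g xji2)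
  | crossl1 : KLRRel (g eji * g dij) (g dij)
  | crossr1 : KLRRel (g dij * g eij) (g dij)
  | crossl2 : KLRRel (g eij * g dji) (g dji)
  | crossr2 : KLRRel (g dji * g eji) (g dji)
  | double1 : KLRRel (g dji * g dij) (g xij1 + g xij2)   -- i·j = −1
  | double2 : KLRRel (g dij * g dji) (g xji1 + g xji2)
  | dotcomm1 : KLRRel (g xij1 * g xij2) (g xij2 * g xij1)
  | dotcomm2 : KLRRel (g xji1 * g xji2) (g xji2 * g xji1)
  | slide1 : KLRRel (g dij * g xij1) (g xji2 * g dij)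
  | slide2 : KLRRel (g dij * g xij2) (g xji1 * g dij)
  | slide3 : KLRRel (g dji * g xji1) (g xij2 * g dji)
  | slide4 : KLRRel (g dji * g xji2) (g xij1 * g dji)

/-- The KLR algebra R(i+j) for i·j = −1. -/
abbrev KLR : Type := RingQuot KLRRel

/-- The image of a generator in R(i+j). -/
def G (a : KLRGen) : KLR := RingQuot.mkAlgHom ℤ KLRRel (g a)

open MvPolynomial Matrix

/-- The subring of 2×2 matrices over ℤ[x₁,x₂] whose lower-left entry is divisible
by x₁ + x₂. -/
def lowerDivSubring : Subring (Matrix (Fin 2) (Fin 2) (MvPolynomial (Fin 2) ℤ)) where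
  carrier := {M | (X 0 + X 1 : MvPolynomial (Fin 2) ℤ) ∣ M 1 0}
  zero_mem' := by simp
  one_mem' := by
    simp [Matrix.one_apply]
  add_mem' := by
    intro a b ha hb
    exact dvd_add ha hb
  neg_mem' := by
    intro a ha
    exact (dvd_neg).2 ha
  mul_mem' := by
    intro a b ha hb
    have : (a * b) 1 0 = a 1 0 * b 0 0 + a 1 1 * b 1 0 := by
      simp [Matrix.mul_apply, Fin.sum_univ_two]
    rw [Set.mem_setOf_eq, this]
    exact dvd_add (ha.mul_right _) (hb.mul_left _)

namespace KLRh
open KLRGen MvPolynomial Matrix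

abbrev Pl : Type := MvPolynomial (Fin 2) ℤ

def dp : Pl := X 0 + X 1

lemma mem_lower {M : Matrix (Fin 2) (Fin 2) Pl} : M ∈ lowerDivSubring ↔ dp ∣ M 1 0 := Iff.rfl

lemma dp_ne : (dp : Pl) ≠ 0 := by
  intro h
  have := congrArg (MvPolynomial.eval (fun _ => (1:ℤ))) h
  simp [dp] at this

open scoped Classical in
/-- division by `dp` (when possible). -/
def qX (p : Pl) : Pl := if h : dp ∣ p then h.choose else 0

lemma qX_spec {p : Pl} (h : dp ∣ p) : dp * qX p = p := by
  rw [qX, dif_pos h]; exact h.choose_spec.symm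

lemma qX_eq {p q : Pl} (h : dp * q = p) : qX p = q :=
  mul_left_cancel₀ dp_ne (by rw [qX_spec ⟨q, h.symm⟩, h])

lemma qX_zero : qX 0 = 0 := qX_eq (mul_zero _)

lemma qX_add {p q : Pl} (hp : dp ∣ p) (hq : dp ∣ q) : qX (p + q) = qX p + qX q :=
  qX_eq (by rw [mul_add, qX_spec hp, qX_spec hq])

lemma qX_mul_left (c : Pl) {p : Pl} (hp : dp ∣ p) : qX (c * p) = c * qX p :=
  qX_eq (by rw [← mul_assoc, mul_comm dp c, mul_assoc, qX_spec hp])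

lemma qX_smul (r : ℤ) {p : Pl} (hp : dp ∣ p) : qX (r • p) = r • qX p :=
  qX_eq (by rw [mul_smul_comm, qX_spec hp])

/-- images of the generators in the matrix subring -/
def F : KLRGen → lowerDivSubring
  | KLRGen.eij => ⟨Matrix.single 0 0 1, by rw [mem_lower]; simp [Matrix.single, dp]⟩
  | KLRGen.eji => ⟨Matrix.single 1 1 1, by rw [mem_lower]; simp [Matrix.single, dp]⟩
  | KLRGen.xij1 => ⟨Matrix.single 0 0 (X 0), by rw [mem_lower]; simp [Matrix.single, dp]⟩
  | KLRGen.xij2 => ⟨Matrix.single 0 0 (X 1), by rw [mem_lower]; simp [Matrix.single, dp]⟩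
  | KLRGen.xji1 => ⟨Matrix.single 1 1 (X 1), by rw [mem_lower]; simp [Matrix.single, dp]⟩
  | KLRGen.xji2 => ⟨Matrix.single 1 1 (X 0), by rw [mem_lower]; simp [Matrix.single, dp]⟩
  | KLRGen.dij => ⟨Matrix.single 1 0 (X 0 + X 1), by rw [mem_lower]; simp [Matrix.single, dp]⟩
  | KLRGen.dji => ⟨Matrix.single 0 1 1, by rw [mem_lower]; simp [Matrix.single, dp]⟩

lemma F_eij : (F eij : Matrix (Fin 2) (Fin 2) Pl) = Matrix.single 0 0 1 := rfl
lemma F_eji : (F eji : Matrix (Fin 2) (Fin 2) Pl) = Matrix.single 1 1 1 := rfl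
lemma F_xij1 : (F xij1 : Matrix (Fin 2) (Fin 2) Pl) = Matrix.single 0 0 (X 0) := rfl
lemma F_xij2 : (F xij2 : Matrix (Fin 2) (Fin 2) Pl) = Matrix.single 0 0 (X 1) := rfl
lemma F_xji1 : (F xji1 : Matrix (Fin 2) (Fin 2) Pl) = Matrix.single 1 1 (X 1) := rfl
lemma F_xji2 : (F xji2 : Matrix (Fin 2) (Fin 2) Pl) = Matrix.single 1 1 (X 0) := rfl
lemma F_dij : (F dij : Matrix (Fin 2) (Fin 2) Pl) = Matrix.single 1 0 (X 0 + X 1) := rfl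
lemma F_dji : (F dji : Matrix (Fin 2) (Fin 2) Pl) = Matrix.single 0 1 1 := rfl

def phi0 : KLRFree →ₐ[ℤ] lowerDivSubring := FreeAlgebra.lift ℤ F

lemma resp : ∀ ⦃x y : KLRFree⦄, KLRRel x y → phi0 x = phi0 y := by
  intro x y h
  cases h <;>
    · apply Subtype.ext
      simp only [phi0, g, _root_.map_mul, _root_.map_add, _root_.map_one, _root_.map_zero,
        FreeAlgebra.lift_ι_apply, Subring.coe_mul, Subring.coe_add, Subring.coe_one,
        Subring.coe_zero, F_eij, F_eji, F_xij1, F_xij2, F_xji1, F_xji2, F_dij, F_dji]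
      ext a b : 2
      fin_cases a <;> fin_cases b <;>
        simp [Matrix.single, Matrix.mul_apply, Fin.sum_univ_two, Matrix.one_apply] <;> ring

end KLRh

namespace KLRh
open KLRGen MvPolynomial Matrix

/-- images of relations in KLR -/
lemma mkrel {x y : KLRFree} (h : KLRRel x y) :
    (RingQuot.mkAlgHom ℤ KLRRel) x = (RingQuot.mkAlgHom ℤ KLRRel) y :=
  RingQuot.mkAlgHom_rel ℤ h

lemma Grel {a b : KLRGen} {z : KLRFree} (h : KLRRel (g a * g b) z) :
    G a * G b = (RingQuot.mkAlgHom ℤ KLRRel) z := by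
  rw [G, G, ← _root_.map_mul]; exact mkrel h

lemma EijEij : G eij * G eij = G eij := Grel KLRRel.idem1
lemma EjiEji : G eji * G eji = G eji := Grel KLRRel.idem2
lemma EijEji : G eij * G eji = 0 := by simpa using Grel KLRRel.orth1
lemma EjiEij : G eji * G eij = 0 := by simpa using Grel KLRRel.orth2
lemma unit_sum : G eij + G eji = 1 := by
  have := mkrel KLRRel.unit
  simpa [G, _root_.map_add, _root_.map_one] using this
lemma EijXij1 : G eij * G xij1 = G xij1 := Grel KLRRel.dotl1
lemma Xij1Eij : G xij1 * G eij = G xij1 := Grel KLRRel.dotr1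
lemma EijXij2 : G eij * G xij2 = G xij2 := Grel KLRRel.dotl2
lemma Xij2Eij : G xij2 * G eij = G xij2 := Grel KLRRel.dotr2
lemma EjiXji1 : G eji * G xji1 = G xji1 := Grel KLRRel.dotl3
lemma Xji1Eji : G xji1 * G eji = G xji1 := Grel KLRRel.dotr3
lemma EjiXji2 : G eji * G xji2 = G xji2 := Grel KLRRel.dotl4
lemma Xji2Eji : G xji2 * G eji = G xji2 := Grel KLRRel.dotr4
lemma EjiDij : G eji * G dij = G dij := Grel KLRRel.crossl1
lemma DijEij : G dij * G eij = G dij := Grel KLRRel.crossr1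
lemma EijDji : G eij * G dji = G dji := Grel KLRRel.crossl2
lemma DjiEji : G dji * G eji = G dji := Grel KLRRel.crossr2
lemma DjiDij : G dji * G dij = G xij1 + G xij2 := by
  simpa [G, _root_.map_add] using Grel KLRRel.double1
lemma DijDji : G dij * G dji = G xji1 + G xji2 := by
  simpa [G, _root_.map_add] using Grel KLRRel.double2
lemma slide1' : G dij * G xij1 = G xji2 * G dij := by
  simpa [G, _root_.map_mul] using Grel KLRRel.slide1
lemma slide2' : G dij * G xij2 = G xji1 * G dij := by
  simpa [G, _root_.map_mul] using Grel KLRRel.slide2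
lemma slide3' : G dji * G xji1 = G xij2 * G dji := by
  simpa [G, _root_.map_mul] using Grel KLRRel.slide3
lemma slide4' : G dji * G xji2 = G xij1 * G dji := by
  simpa [G, _root_.map_mul] using Grel KLRRel.slide4

-- derived
lemma EijDij : G eij * G dij = 0 := by
  rw [← EjiDij, ← mul_assoc, EijEji, zero_mul]
lemma DijEji : G dij * G eji = 0 := by
  calc G dij * G eji = G dij * G eij * G eji := by rw [DijEij]
    _ = G dij * (G eij * G eji) := mul_assoc _ _ _
    _ = 0 := by rw [EijEji, mul_zero]
lemma EjiDji : G eji * G dji = 0 := by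
  rw [← EijDji, ← mul_assoc, EjiEij, zero_mul]
lemma DjiEij : G dji * G eij = 0 := by
  calc G dji * G eij = G dji * G eji * G eij := by rw [DjiEji]
    _ = G dji * (G eji * G eij) := mul_assoc _ _ _
    _ = 0 := by rw [EjiEij, mul_zero]
lemma DijDij : G dij * G dij = 0 := by
  calc G dij * G dij = G dij * (G eji * G dij) := by rw [EjiDij]
    _ = G dij * G eji * G dij := (mul_assoc _ _ _).symm
    _ = 0 := by rw [DijEji, zero_mul]
lemma DjiDji : G dji * G dji = 0 := by
  calc G dji * G dji = G dji * (G eij * G dji) := by rw [EijDji]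
    _ = G dji * G eij * G dji := (mul_assoc _ _ _).symm
    _ = 0 := by rw [DjiEij, zero_mul]

lemma dotcomm1' : G xij1 * G xij2 = G xij2 * G xij1 := by
  simpa [G, _root_.map_mul] using Grel KLRRel.dotcomm1
lemma dotcomm2' : G xji1 * G xji2 = G xji2 * G xji1 := by
  simpa [G, _root_.map_mul] using Grel KLRRel.dotcomm2

noncomputable instance : CommRing (Algebra.adjoin ℤ ({G xij1, G xij2} : Set KLR)) :=
  Algebra.adjoinCommRingOfComm ℤ (by
    rintro a (rfl | rfl) b (rfl | rfl)
    · rfl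
    · exact dotcomm1'
    · exact dotcomm1'.symm
    · rfl)

noncomputable instance : CommRing (Algebra.adjoin ℤ ({G xji1, G xji2} : Set KLR)) :=
  Algebra.adjoinCommRingOfComm ℤ (by
    rintro a (rfl | rfl) b (rfl | rfl)
    · rfl
    · exact dotcomm2'
    · exact dotcomm2'.symm
    · rfl)

/-- evaluation of polynomials on the ij-dots -/
def al : Pl →ₐ[ℤ] KLR :=
  (Algebra.adjoin ℤ ({G xij1, G xij2} : Set KLR)).val.comp
    (MvPolynomial.aeval
      ![⟨G xij1, Algebra.subset_adjoin (by simp)⟩, ⟨G xij2, Algebra.subset_adjoin (by simp)⟩])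

/-- evaluation of polynomials on the ji-dots -/
def be : Pl →ₐ[ℤ] KLR :=
  (Algebra.adjoin ℤ ({G xji1, G xji2} : Set KLR)).val.comp
    (MvPolynomial.aeval
      ![⟨G xji2, Algebra.subset_adjoin (by simp)⟩, ⟨G xji1, Algebra.subset_adjoin (by simp)⟩])

lemma al_X0 : al (X 0) = G xij1 := by simp [al]
lemma al_X1 : al (X 1) = G xij2 := by simp [al]
lemma be_X0 : be (X 0) = G xji2 := by simp [be]
lemma be_X1 : be (X 1) = G xji1 := by simp [be]

lemma hom_slide (u : KLR) (f f' : Pl →ₐ[ℤ] KLR)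
    (h : ∀ i, u * f (X i) = f' (X i) * u) (p : Pl) :
    u * f p = f' p * u := by
  induction p using MvPolynomial.induction_on with
  | C a =>
    rw [← MvPolynomial.algebraMap_eq, AlgHom.commutes, AlgHom.commutes,
      Algebra.commutes]
  | add p q hp hq => simp only [_root_.map_add, mul_add, add_mul, hp, hq]
  | mul_X p i hp =>
    rw [_root_.map_mul, _root_.map_mul, ← mul_assoc, hp, mul_assoc, h i, ← mul_assoc]

lemma Eij_al (p : Pl) : G eij * al p = al p * G eij := by
  refine hom_slide _ _ _ (fun i => ?_) p
  fin_cases i <;>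
    simp [al_X0, al_X1, EijXij1, Xij1Eij, EijXij2, Xij2Eij]

lemma Eji_be (p : Pl) : G eji * be p = be p * G eji := by
  refine hom_slide _ _ _ (fun i => ?_) p
  fin_cases i <;>
    simp [be_X0, be_X1, EjiXji1, Xji1Eji, EjiXji2, Xji2Eji]

lemma Dij_al (p : Pl) : G dij * al p = be p * G dij := by
  refine hom_slide _ _ _ (fun i => ?_) p
  fin_cases i <;> simp [al_X0, al_X1, be_X0, be_X1, slide1', slide2']

lemma Dji_be (p : Pl) : G dji * be p = al p * G dji := by
  refine hom_slide _ _ _ (fun i => ?_) p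
  fin_cases i <;> simp [al_X0, al_X1, be_X0, be_X1, slide3', slide4']

lemma al_dp : al dp = G xij1 + G xij2 := by
  simp [dp, _root_.map_add, al_X0, al_X1]
lemma be_dp : be dp = G xji2 + G xji1 := by
  simp [dp, _root_.map_add, be_X0, be_X1]

lemma DjiDij' : G dji * G dij = G eij * al dp := by
  rw [al_dp, mul_add, EijXij1, EijXij2, DjiDij]
lemma DijDji' : G dij * G dji = G eji * be dp := by
  rw [be_dp, mul_add, EjiXji2, EjiXji1, DijDji, add_comm]

end KLRh

namespace KLRh
open KLRGen MvPolynomial Matrix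

-- more derived relations
lemma Xij1Eji : G xij1 * G eji = 0 := by
  calc G xij1 * G eji = G xij1 * G eij * G eji := by rw [Xij1Eij]
    _ = G xij1 * (G eij * G eji) := mul_assoc _ _ _
    _ = 0 := by rw [EijEji, mul_zero]
lemma Xij2Eji : G xij2 * G eji = 0 := by
  calc G xij2 * G eji = G xij2 * G eij * G eji := by rw [Xij2Eij]
    _ = G xij2 * (G eij * G eji) := mul_assoc _ _ _
    _ = 0 := by rw [EijEji, mul_zero]
lemma Xji1Eij : G xji1 * G eij = 0 := by
  calc G xji1 * G eij = G xji1 * G eji * G eij := by rw [Xji1Eji]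
    _ = G xji1 * (G eji * G eij) := mul_assoc _ _ _
    _ = 0 := by rw [EjiEij, mul_zero]
lemma Xji2Eij : G xji2 * G eij = 0 := by
  calc G xji2 * G eij = G xji2 * G eji * G eij := by rw [Xji2Eji]
    _ = G xji2 * (G eji * G eij) := mul_assoc _ _ _
    _ = 0 := by rw [EjiEij, mul_zero]

lemma Xij1Dij : G xij1 * G dij = 0 := by
  rw [← EjiDij, ← mul_assoc, Xij1Eji, zero_mul]
lemma Xij2Dij : G xij2 * G dij = 0 := by
  rw [← EjiDij, ← mul_assoc, Xij2Eji, zero_mul]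
lemma Xji1Dji : G xji1 * G dji = 0 := by
  rw [← EijDji, ← mul_assoc, Xji1Eij, zero_mul]
lemma Xji2Dji : G xji2 * G dji = 0 := by
  rw [← EijDji, ← mul_assoc, Xji2Eij, zero_mul]

lemma Xij1Dji : G xij1 * G dji = G dji * G xji2 := by
  have := Dji_be (X 0); rw [be_X0, al_X0] at this; exact this.symm
lemma Xij2Dji : G xij2 * G dji = G dji * G xji1 := by
  have := Dji_be (X 1); rw [be_X1, al_X1] at this; exact this.symm
lemma Xji1Dij : G xji1 * G dij = G dij * G xij2 := by
  have := Dij_al (X 1); rw [be_X1, al_X1] at this; exact this.symm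
lemma Xji2Dij : G xji2 * G dij = G dij * G xij1 := by
  have := Dij_al (X 0); rw [be_X0, al_X0] at this; exact this.symm

lemma qX_dp_mul (p : Pl) : qX (dp * p) = p := qX_eq rfl

/-- build an element of the subring from entries -/
def mkM (A B C D : Pl) (h : dp ∣ C) : lowerDivSubring := ⟨!![A, B; C, D], mem_lower.2 h⟩

/-- the inverse map (as a bare function) -/
def psi (M : lowerDivSubring) : KLR :=
  G eij * al ((M : Matrix (Fin 2) (Fin 2) Pl) 0 0)
  + G dji * be ((M : Matrix (Fin 2) (Fin 2) Pl) 0 1)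
  + G dij * al (qX ((M : Matrix (Fin 2) (Fin 2) Pl) 1 0))
  + G eji * be ((M : Matrix (Fin 2) (Fin 2) Pl) 1 1)

lemma psi_mkM (A B C D : Pl) (h : dp ∣ C) :
    psi (mkM A B C D h)
      = G eij * al A + G dji * be B + G dij * al (qX C) + G eji * be D := by
  simp [psi, mkM]

lemma dvdM (M : lowerDivSubring) : dp ∣ (M : Matrix (Fin 2) (Fin 2) Pl) 1 0 :=
  mem_lower.1 M.2

lemma mul_psi_eij (M : lowerDivSubring) :
    G eij * psi M
      = psi (mkM ((M : Matrix (Fin 2) (Fin 2) Pl) 0 0)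
          ((M : Matrix (Fin 2) (Fin 2) Pl) 0 1) 0 0 (dvd_zero _)) := by
  rw [psi_mkM]
  simp only [psi, mul_add, ← mul_assoc, EijEij, EijDji, EijDij, EijEji,
    zero_mul, add_zero, qX_zero, map_zero, mul_zero]

lemma mul_psi_eji (M : lowerDivSubring) :
    G eji * psi M
      = psi (mkM 0 0 ((M : Matrix (Fin 2) (Fin 2) Pl) 1 0)
          ((M : Matrix (Fin 2) (Fin 2) Pl) 1 1) (dvdM M)) := by
  rw [psi_mkM]
  simp only [psi, mul_add, ← mul_assoc, EjiEij, EjiDji, EjiDij, EjiEji,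
    zero_mul, add_zero, zero_add, map_zero, mul_zero]

lemma mul_psi_xij1 (M : lowerDivSubring) :
    G xij1 * psi M
      = psi (mkM (X 0 * (M : Matrix (Fin 2) (Fin 2) Pl) 0 0)
          (X 0 * (M : Matrix (Fin 2) (Fin 2) Pl) 0 1) 0 0 (dvd_zero _)) := by
  rw [psi_mkM]
  simp only [psi, mul_add, ← mul_assoc, _root_.map_mul, al_X0, be_X0,
    Xij1Eij, Xij1Dji, Xij1Dij, Xij1Eji, EijXij1, EijDji,
    zero_mul, add_zero, qX_zero, map_zero, mul_zero]

lemma mul_psi_xij2 (M : lowerDivSubring) :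
    G xij2 * psi M
      = psi (mkM (X 1 * (M : Matrix (Fin 2) (Fin 2) Pl) 0 0)
          (X 1 * (M : Matrix (Fin 2) (Fin 2) Pl) 0 1) 0 0 (dvd_zero _)) := by
  rw [psi_mkM]
  simp only [psi, mul_add, ← mul_assoc, _root_.map_mul, al_X1, be_X1,
    Xij2Eij, Xij2Dji, Xij2Dij, Xij2Eji, EijXij2, EijDji,
    zero_mul, add_zero, qX_zero, map_zero, mul_zero]

lemma mul_psi_xji1 (M : lowerDivSubring) :
    G xji1 * psi M
      = psi (mkM 0 0 (X 1 * (M : Matrix (Fin 2) (Fin 2) Pl) 1 0)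
          (X 1 * (M : Matrix (Fin 2) (Fin 2) Pl) 1 1) ((dvdM M).mul_left _)) := by
  rw [psi_mkM, qX_mul_left (X 1) (dvdM M)]
  simp only [psi, mul_add, ← mul_assoc, _root_.map_mul, al_X1, be_X1,
    Xji1Eij, Xji1Dji, Xji1Dij, Xji1Eji, EjiXji1, EjiDij,
    zero_mul, add_zero, zero_add, map_zero, mul_zero]

lemma mul_psi_xji2 (M : lowerDivSubring) :
    G xji2 * psi M
      = psi (mkM 0 0 (X 0 * (M : Matrix (Fin 2) (Fin 2) Pl) 1 0)
          (X 0 * (M : Matrix (Fin 2) (Fin 2) Pl) 1 1) ((dvdM M).mul_left _)) := by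
  rw [psi_mkM, qX_mul_left (X 0) (dvdM M)]
  simp only [psi, mul_add, ← mul_assoc, _root_.map_mul, al_X0, be_X0,
    Xji2Eij, Xji2Dji, Xji2Dij, Xji2Eji, EjiXji2, EjiDij,
    zero_mul, add_zero, zero_add, map_zero, mul_zero]

lemma mul_psi_dij (M : lowerDivSubring) :
    G dij * psi M
      = psi (mkM 0 0 (dp * (M : Matrix (Fin 2) (Fin 2) Pl) 0 0)
          (dp * (M : Matrix (Fin 2) (Fin 2) Pl) 0 1) (Dvd.intro _ rfl)) := by
  rw [psi_mkM, qX_dp_mul]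
  simp only [psi, mul_add, ← mul_assoc, _root_.map_mul, DijEij, DijDji', DijDij, DijEji,
    zero_mul, add_zero, zero_add, map_zero, mul_zero]

lemma mul_psi_dji (M : lowerDivSubring) :
    G dji * psi M
      = psi (mkM ((M : Matrix (Fin 2) (Fin 2) Pl) 1 0)
          ((M : Matrix (Fin 2) (Fin 2) Pl) 1 1) 0 0 (dvd_zero _)) := by
  rw [psi_mkM]
  conv_rhs => rw [← qX_spec (dvdM M)]
  simp only [psi, mul_add, ← mul_assoc, _root_.map_mul, DjiEij, DjiDij', DjiDji, DjiEji,
    zero_mul, add_zero, zero_add, qX_zero, map_zero, mul_zero]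

end KLRh

namespace KLRh
open KLRGen MvPolynomial Matrix

lemma psi_add (M N : lowerDivSubring) : psi (M + N) = psi M + psi N := by
  simp only [psi, Subring.coe_add, Matrix.add_apply, qX_add (dvdM M) (dvdM N),
    _root_.map_add, mul_add]
  abel

lemma psi_zsmul (r : ℤ) (M : lowerDivSubring) : psi (r • M) = r • psi M := by
  simp only [psi, AddSubgroupClass.coe_zsmul, Matrix.smul_apply, qX_smul r (dvdM M),
    _root_.map_smul, map_zsmul, mul_smul_comm, smul_add]
  module

lemma psi_one : psi 1 = 1 := by
  have h00 : ((1 : lowerDivSubring) : Matrix (Fin 2) (Fin 2) Pl) 0 0 = 1 := by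
    simp [Matrix.one_apply]
  have h01 : ((1 : lowerDivSubring) : Matrix (Fin 2) (Fin 2) Pl) 0 1 = 0 := by
    simp [Matrix.one_apply]
  have h10 : ((1 : lowerDivSubring) : Matrix (Fin 2) (Fin 2) Pl) 1 0 = 0 := by
    simp [Matrix.one_apply]
  have h11 : ((1 : lowerDivSubring) : Matrix (Fin 2) (Fin 2) Pl) 1 1 = 1 := by
    simp [Matrix.one_apply]
  rw [psi, h00, h01, h10, h11]
  simp only [qX_zero, map_zero, mul_zero, _root_.map_one, mul_one, add_zero, zero_add]
  exact unit_sum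

lemma psi_step (y : KLRFree) :
    ∀ M : lowerDivSubring, ∃ M', (RingQuot.mkAlgHom ℤ KLRRel) y * psi M = psi M' := by
  induction y using FreeAlgebra.induction with
  | grade0 r =>
    intro M
    refine ⟨r • M, ?_⟩
    rw [AlgHom.commutes, psi_zsmul]
    exact (Algebra.smul_def r (psi M)).symm
  | grade1 a =>
    intro M
    cases a
    · exact ⟨_, mul_psi_eij M⟩
    · exact ⟨_, mul_psi_eji M⟩
    · exact ⟨_, mul_psi_xij1 M⟩
    · exact ⟨_, mul_psi_xij2 M⟩
    · exact ⟨_, mul_psi_xji1 M⟩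
    · exact ⟨_, mul_psi_xji2 M⟩
    · exact ⟨_, mul_psi_dij M⟩
    · exact ⟨_, mul_psi_dji M⟩
  | mul y z hy hz =>
    intro M
    obtain ⟨M', hM'⟩ := hz M
    obtain ⟨M'', hM''⟩ := hy M'
    exact ⟨M'', by rw [_root_.map_mul, mul_assoc, hM', hM'']⟩
  | add y z hy hz =>
    intro M
    obtain ⟨M', hM'⟩ := hy M
    obtain ⟨M'', hM''⟩ := hz M
    exact ⟨M' + M'', by rw [_root_.map_add, add_mul, hM', hM'', psi_add]⟩

lemma psi_surj : Function.Surjective psi := by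
  intro x
  obtain ⟨y, rfl⟩ := RingQuot.mkAlgHom_surjective ℤ KLRRel x
  obtain ⟨M, hM⟩ := psi_step y 1
  exact ⟨M, by rw [← hM, psi_one, mul_one]⟩

/-- the forward algebra map -/
def phi : KLR →ₐ[ℤ] lowerDivSubring := RingQuot.liftAlgHom ℤ ⟨phi0, resp⟩

lemma phi_G (a : KLRGen) : phi (G a) = F a := by
  rw [G, phi, RingQuot.liftAlgHom_mkAlgHom_apply]
  exact FreeAlgebra.lift_ι_apply _ _

/-- key computation: multiplying a std basis matrix by the image of a polynomial -/
lemma key (i k : Fin 2) (c : Pl) (w : Pl →ₐ[ℤ] Matrix (Fin 2) (Fin 2) Pl)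
    (h0 : w (X 0) = Matrix.single k k (X 0)) (h1 : w (X 1) = Matrix.single k k (X 1))
    (p : Pl) : Matrix.single i k c * w p = Matrix.single i k (c * p) := by
  induction p using MvPolynomial.induction_on with
  | C r =>
    rw [← MvPolynomial.algebraMap_eq, AlgHom.commutes]
    ext a b : 1
    fin_cases a <;> fin_cases b <;> fin_cases i <;> fin_cases k <;>
      simp [Matrix.single, Matrix.mul_apply, Fin.sum_univ_two,
        ← Matrix.diagonal_intCast, Matrix.diagonal_apply]
  | add p q hp hq => rw [_root_.map_add, mul_add, hp, hq, mul_add, ← Matrix.single_add]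
  | mul_X p s hp =>
    have hx : w (X s) = Matrix.single k k (X s) := by fin_cases s <;> assumption
    rw [_root_.map_mul, ← mul_assoc, hp, hx, Matrix.single_mul_single_same, ← mul_assoc]

def wal : Pl →ₐ[ℤ] Matrix (Fin 2) (Fin 2) Pl :=
  (lowerDivSubring.subtype.toIntAlgHom.comp (phi.comp al))
def wbe : Pl →ₐ[ℤ] Matrix (Fin 2) (Fin 2) Pl :=
  (lowerDivSubring.subtype.toIntAlgHom.comp (phi.comp be))

lemma wal_X0 : wal (X 0) = Matrix.single 0 0 (X 0) := by
  show (phi (al (X 0)) : Matrix (Fin 2) (Fin 2) Pl) = _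
  rw [al_X0, phi_G, F_xij1]
lemma wal_X1 : wal (X 1) = Matrix.single 0 0 (X 1) := by
  show (phi (al (X 1)) : Matrix (Fin 2) (Fin 2) Pl) = _
  rw [al_X1, phi_G, F_xij2]
lemma wbe_X0 : wbe (X 0) = Matrix.single 1 1 (X 0) := by
  show (phi (be (X 0)) : Matrix (Fin 2) (Fin 2) Pl) = _
  rw [be_X0, phi_G, F_xji2]
lemma wbe_X1 : wbe (X 1) = Matrix.single 1 1 (X 1) := by
  show (phi (be (X 1)) : Matrix (Fin 2) (Fin 2) Pl) = _
  rw [be_X1, phi_G, F_xji1]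

lemma phi_psi (M : lowerDivSubring) : phi (psi M) = M := by
  apply Subtype.ext
  have e1 : (phi (G eij * al ((M : Matrix (Fin 2) (Fin 2) Pl) 0 0)) :
      Matrix (Fin 2) (Fin 2) Pl) = Matrix.single 0 0 ((M : Matrix (Fin 2) (Fin 2) Pl) 0 0) := by
    rw [_root_.map_mul, Subring.coe_mul, phi_G, F_eij]
    have h := key 0 0 1 wal wal_X0 wal_X1 ((M : Matrix (Fin 2) (Fin 2) Pl) 0 0)
    rw [one_mul] at h
    exact h
  have e2 : (phi (G dji * be ((M : Matrix (Fin 2) (Fin 2) Pl) 0 1)) :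
      Matrix (Fin 2) (Fin 2) Pl) = Matrix.single 0 1 ((M : Matrix (Fin 2) (Fin 2) Pl) 0 1) := by
    rw [_root_.map_mul, Subring.coe_mul, phi_G, F_dji]
    have h := key 0 1 1 wbe wbe_X0 wbe_X1 ((M : Matrix (Fin 2) (Fin 2) Pl) 0 1)
    rw [one_mul] at h
    exact h
  have e3 : (phi (G dij * al (qX ((M : Matrix (Fin 2) (Fin 2) Pl) 1 0))) :
      Matrix (Fin 2) (Fin 2) Pl) = Matrix.single 1 0 ((M : Matrix (Fin 2) (Fin 2) Pl) 1 0) := by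
    rw [_root_.map_mul, Subring.coe_mul, phi_G, F_dij]
    have h := key 1 0 (X 0 + X 1) wal wal_X0 wal_X1 (qX ((M : Matrix (Fin 2) (Fin 2) Pl) 1 0))
    rw [show (X 0 + X 1 : Pl) = dp from rfl, qX_spec (dvdM M)] at h
    exact h
  have e4 : (phi (G eji * be ((M : Matrix (Fin 2) (Fin 2) Pl) 1 1)) :
      Matrix (Fin 2) (Fin 2) Pl) = Matrix.single 1 1 ((M : Matrix (Fin 2) (Fin 2) Pl) 1 1) := by
    rw [_root_.map_mul, Subring.coe_mul, phi_G, F_eji]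
    have h := key 1 1 1 wbe wbe_X0 wbe_X1 ((M : Matrix (Fin 2) (Fin 2) Pl) 1 1)
    rw [one_mul] at h
    exact h
  simp only [psi, _root_.map_add, Subring.coe_add, e1, e2, e3, e4]
  ext a b
  fin_cases a <;> fin_cases b <;> simp [Matrix.single]

lemma phi_bij : Function.Bijective phi := by
  constructor
  · intro x y h
    obtain ⟨M, rfl⟩ := psi_surj x
    obtain ⟨N, rfl⟩ := psi_surj y
    rw [phi_psi, phi_psi] at h
    rw [h]
  · intro M
    exact ⟨psi M, phi_psi M⟩

end KLRh


open KLRh in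
/-- for two adjacent vertices i, j (i·j = −1), the KLR algebra R(i+j)
is isomorphic to the subring of 2×2 matrices over ℤ[x₁,x₂] whose lower-left entry
is divisible by x₁+x₂; the crossing 1_{ij} → 1_{ji} maps to (x₁+x₂)E₂₁ and the
crossing 1_{ji} → 1_{ij} maps to E₁₂, with idempotents and dots mapping as in the
orthogonal case. -/
theorem klr_iso_matrix_adjacent_case :
    ∃ φ : KLR ≃+* lowerDivSubring,
      (φ (G eij) : Matrix (Fin 2) (Fin 2) (MvPolynomial (Fin 2) ℤ))
          = single 0 0 1 ∧
      (φ (G eji) : Matrix (Fin 2) (Fin 2) (MvPolynomial (Fin 2) ℤ))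
          = single 1 1 1 ∧
      (φ (G dij) : Matrix (Fin 2) (Fin 2) (MvPolynomial (Fin 2) ℤ))
          = single 1 0 (X 0 + X 1) ∧
      (φ (G dji) : Matrix (Fin 2) (Fin 2) (MvPolynomial (Fin 2) ℤ))
          = single 0 1 1 ∧
      (φ (G xij1) : Matrix (Fin 2) (Fin 2) (MvPolynomial (Fin 2) ℤ))
          = single 0 0 (X 0) ∧
      (φ (G xij2) : Matrix (Fin 2) (Fin 2) (MvPolynomial (Fin 2) ℤ))
          = single 0 0 (X 1) ∧
      (φ (G xji1) : Matrix (Fin 2) (Fin 2) (MvPolynomial (Fin 2) ℤ))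
          = single 1 1 (X 1) ∧
      (φ (G xji2) : Matrix (Fin 2) (Fin 2) (MvPolynomial (Fin 2) ℤ))
          = single 1 1 (X 0) := by
  refine ⟨RingEquiv.ofBijective phi phi_bij, ?_, ?_, ?_, ?_, ?_, ?_, ?_, ?_⟩ <;>
    · rw [show ∀ x, (RingEquiv.ofBijective phi phi_bij) x = phi x from fun _ => rfl, phi_G]
      rfl

end
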